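/- arXiv:math/0610823 — 2 statements merged into one kernel-verified Lean document; each statement's English description precedes it below -/
import Mathlib

section
/- Let m ∈ ℕ, (i_1, …, i_m) ∈ N^m and a ∈ A; set b := i_1⋯i_m ▷ a and let w be the σ-composite of the word (i_2, …, i_m) at a. If α_{i_1,i_1▷b} ∈ w(R⁺_a), then σ_{i_1,i_1▷b}(w(R⁺_a)) ∩ (−R⁺_b) = σ_{i_1,i_1▷b}( w(R⁺_a) ∩ (−R⁺_{i_1▷b}) ) ∪ {−α_{i_1,b}}; otherwise (that is, −α_{i_1,i_1▷b} ∈ w(R⁺_a)), σ_{i_1,i_1▷b}(w(R⁺_a)) ∩ (−R⁺_b) = σ_{i_1,i_1▷b}( (w(R⁺_a) ∩ (−R⁺_{i_1▷b})) \ {−α_{i_1,i_1▷b}} ). -/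
open Pointwise

variable {N : Type*} {A : Type*}

/-- The element `(i j)^m ▷ a` for the action of `F₂(N)` on `A`. -/
def altIter (act : N → A → A) (i j : N) (a : A) : ℕ → A
  | 0 => a
  | m + 1 => act i (act j (altIter act i j a m))

/-- The set `Θ(i,j;a)`. -/
def ThetaSet (act : N → A → A) (i j : N) (a : A) : Set A :=
  {x | ∃ m : ℕ, x = altIter act i j a m ∨ x = altIter act j i a m}

/-- The set of `ℕ₀`-linear combinations of elements of `s`. -/
def NSpan (s : Set (N →₀ ℝ)) : Set (N →₀ ℝ) :=
  (AddSubmonoid.closure s : Set (N →₀ ℝ))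

/-- A generalized root system: a transitive action of `F₂(N)` on `A` (axiom (1)),
roots `root a ⊆ ℝ^{(N)}` with simple roots `α n a` forming a basis (axiom (2)),
and maps `σ i a ∈ GL(ℝ^{(N)})`, satisfying axioms (3)-(7). -/
structure GRS (N : Type*) (A : Type*) where
  act : N → A → A
  act_invol : ∀ n a, act n (act n a) = a
  act_trans : ∀ a b : A, ∃ l : List N, l.foldr act a = b
  root : A → Set (N →₀ ℝ)
  α : N → A → N →₀ ℝ
  α_mem : ∀ n a, α n a ∈ root a
  α_indep : ∀ a, LinearIndependent ℝ fun n => α n a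
  α_span : ∀ a, Submodule.span ℝ (Set.range fun n => α n a) = ⊤
  σ : N → A → (N →₀ ℝ) ≃ₗ[ℝ] (N →₀ ℝ)
  ax3 : ∀ a, root a =
    root a ∩ NSpan (Set.range fun n => α n a) ∪ -(root a ∩ NSpan (Set.range fun n => α n a))
  ax4 : ∀ i a, (Set.range fun r : ℝ => r • α i a) ∩ root a = {α i a, -α i a}
  ax5_root : ∀ i a, ⇑(σ i a) '' root a = root (act i a)
  ax5_diag : ∀ i a, σ i a (α i a) = -α i (act i a)
  ax5_off : ∀ i a j, j ≠ i →
    ∃ m : ℕ, σ i a (α j a) = α j (act i a) + (m : ℝ) • α i (act i a)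
  ax6 : ∀ i a v, σ i (act i a) (σ i a v) = v
  ax7 : ∀ a (i j : N), i ≠ j →
    (root a ∩ {β | ∃ p q : ℕ, β = (p : ℝ) • α i a + (q : ℝ) • α j a}).Finite →
    (ThetaSet act i j a).Finite ∧
      (ThetaSet act i j a).ncard ∣
        (root a ∩ {β | ∃ p q : ℕ, β = (p : ℝ) • α i a + (q : ℝ) • α j a}).ncard

/-- The positive roots `R⁺_a`. -/
def GRS.pos (G : GRS N A) (a : A) : Set (N →₀ ℝ) :=
  G.root a ∩ NSpan (Set.range fun n => G.α n a)

/-- The target `i₁ ⋯ i_m ▷ a` of the word `(i₁, …, i_m)` at `a`. -/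
def GRS.target (G : GRS N A) (l : List N) (a : A) : A :=
  l.foldr G.act a

/-- The σ-composite `σ_{i₁,b₁} ∘ ⋯ ∘ σ_{i_m,b_m}` of the word `(i₁, …, i_m)` at `a`. -/
noncomputable def GRS.wmap (G : GRS N A) : List N → A → (N →₀ ℝ) ≃ₗ[ℝ] (N →₀ ℝ)
  | [], _ => LinearEquiv.refl ℝ _
  | i :: l, a => (G.wmap l a).trans (G.σ i (G.target l a))

/-- The length `ℓ` of a word at `a`: the minimal length of a word at `a`
with the same target and the same σ-composite. -/
noncomputable def GRS.len (G : GRS N A) (l : List N) (a : A) : ℕ :=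
  sInf {m | ∃ l' : List N, l'.length = m ∧
    G.target l' a = G.target l a ∧ G.wmap l' a = G.wmap l a}

/-- A word of length `m` at `a` is reduced if `ℓ = m`. -/
def GRS.Reduced (G : GRS N A) (l : List N) (a : A) : Prop :=
  G.len l a = l.length

/-- `m_{i,j;a} = |R_a ∩ (ℕ₀ α_{i,a} + ℕ₀ α_{j,a})|`. -/
noncomputable def GRS.mij (G : GRS N A) (i j : N) (a : A) : ℕ :=
  (G.root a ∩ {β | ∃ p q : ℕ, β = (p : ℝ) • G.α i a + (q : ℝ) • G.α j a}).ncard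

/-- The alternating word `(i₁, …, i_m)` with `i_k = i` for `k` odd (leftmost letter `i`). -/
def altList (i j : N) : ℕ → List N
  | 0 => []
  | m + 1 => i :: altList j i m

/-- The alternating word of length `m` in the letters `i,j` whose rightmost letter is `i`. -/
def altR (i j : N) : ℕ → List N
  | 0 => []
  | m + 1 => altR j i m ++ [i]

/-- `a_m = i_m ⋯ i_1 ▷ a` for the alternating sequence with `i_k = i` for odd `k`. -/
def aIter (act : N → A → A) (i j : N) (a : A) : ℕ → A
  | 0 => a
  | m + 1 => act (if m % 2 = 0 then i else j) (aIter act i j a m)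

/-- The set of real roots `R^{re}_a`. -/
def GRS.reroot (G : GRS N A) (a : A) : Set (N →₀ ℝ) :=
  {β | ∃ (b : A) (l : List N) (n : N), G.target l b = a ∧ β = G.wmap l b (G.α n b)}

/-- The word `C(i,j;a)`: alternating of length `m_{i,j;a} - 1` with leftmost letter `i`. -/
noncomputable def GRS.Cword (G : GRS N A) (i j : N) (a : A) : List N :=
  altList i j (G.mij i j a - 1)


set_option linter.unusedSectionVars false

open Module

section Aux

variable [Nonempty N]

noncomputable def GRS.basisAt (G : GRS N A) (a : A) : Basis N ℝ (N →₀ ℝ) :=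
  Basis.mk (G.α_indep a) (G.α_span a).ge

lemma GRS.basisAt_apply (G : GRS N A) (a : A) (n : N) : G.basisAt a n = G.α n a :=
  Basis.mk_apply _ _ _

lemma GRS.coord_nonneg (G : GRS N A) (a : A) {x : N →₀ ℝ}
    (hx : x ∈ NSpan (Set.range fun n => G.α n a)) (n : N) :
    0 ≤ (G.basisAt a).repr x n := by
  induction hx using AddSubmonoid.closure_induction with
  | mem y hy =>
    obtain ⟨m, rfl⟩ := hy
    have h : (fun n => G.α n a) m = G.basisAt a m := (G.basisAt_apply a m).symm
    rw [h, Basis.repr_self]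
    rcases eq_or_ne m n with rfl | h
    · simp
    · simp [Finsupp.single_eq_of_ne' h]
  | zero => simp
  | add y z _ _ hy hz => rw [map_add]; exact add_nonneg hy hz

lemma GRS.repr_σ (G : GRS N A) (i : N) (a : A) {j : N} (hj : j ≠ i) (x : N →₀ ℝ) :
    (G.basisAt (G.act i a)).repr (G.σ i a x) j = (G.basisAt a).repr x j := by
  have key : (((G.basisAt (G.act i a)).coord j).comp (G.σ i a : (N →₀ ℝ) →ₗ[ℝ] (N →₀ ℝ)))
      = (G.basisAt a).coord j := by
    apply Basis.ext (G.basisAt a)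
    intro k
    rcases eq_or_ne k i with rfl | hk
    · simp only [LinearMap.comp_apply, LinearEquiv.coe_coe, Basis.coord_apply,
        G.basisAt_apply, G.ax5_diag]
      rw [← G.basisAt_apply (G.act k a) k, ← G.basisAt_apply a k, map_neg,
        Basis.repr_self, Basis.repr_self]
      simp [Finsupp.single_eq_of_ne' (Ne.symm hj)]
    · obtain ⟨m, hm⟩ := G.ax5_off i a k hk
      simp only [LinearMap.comp_apply, LinearEquiv.coe_coe, Basis.coord_apply,
        G.basisAt_apply, hm]
      rw [← G.basisAt_apply (G.act i a) k, ← G.basisAt_apply (G.act i a) i,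
        ← G.basisAt_apply a k, map_add, map_smul,
        Basis.repr_self, Basis.repr_self, Basis.repr_self]
      simp [Finsupp.single_eq_of_ne' (Ne.symm hj)]
  simpa [Basis.coord_apply] using LinearMap.congr_fun key x

lemma GRS.alpha_pos (G : GRS N A) (n : N) (a : A) : G.α n a ∈ G.pos a :=
  ⟨G.α_mem n a, AddSubmonoid.subset_closure ⟨n, rfl⟩⟩

lemma GRS.root_split (G : GRS N A) {a : A} {β : N →₀ ℝ} (h : β ∈ G.root a) :
    β ∈ G.pos a ∨ β ∈ -G.pos a := by
  rw [G.ax3 a] at h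
  exact h

lemma GRS.pos_disj (G : GRS N A) {a : A} {x : N →₀ ℝ} (h1 : x ∈ G.pos a)
    (h2 : -x ∈ G.pos a) : False := by
  have hx0 : x = 0 := by
    have h : (G.basisAt a).repr x = 0 := by
      ext j
      have a1 := G.coord_nonneg a h1.2 j
      have a2 := G.coord_nonneg a h2.2 j
      rw [map_neg, Finsupp.neg_apply] at a2
      simp only [Finsupp.coe_zero, Pi.zero_apply]
      linarith
    simpa using (G.basisAt a).repr.map_eq_zero_iff.mp h
  obtain ⟨n⟩ := ‹Nonempty N›
  have h0 : (0 : N →₀ ℝ) ∈ (Set.range fun r : ℝ => r • G.α n a) ∩ G.root a :=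
    ⟨⟨0, zero_smul ℝ _⟩, hx0 ▸ h1.1⟩
  rw [G.ax4] at h0
  have hnz := (G.α_indep a).ne_zero n
  rcases h0 with h | h
  · exact hnz h.symm
  · exact hnz (by simpa using h.symm)

lemma GRS.sigma_pos (G : GRS N A) (i : N) (a : A) {β : N →₀ ℝ} (hβ : β ∈ G.pos a)
    (hne : β ≠ G.α i a) : G.σ i a β ∈ G.pos (G.act i a) := by
  have hr : G.σ i a β ∈ G.root (G.act i a) := by
    rw [← G.ax5_root]; exact ⟨β, hβ.1, rfl⟩
  rcases G.root_split hr with h | h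
  · exact h
  exfalso
  rw [Set.mem_neg] at h
  have hcoord : ∀ j, j ≠ i → (G.basisAt a).repr β j = 0 := by
    intro j hj
    have h1 := G.coord_nonneg a hβ.2 j
    have h2 := G.coord_nonneg (G.act i a) h.2 j
    rw [map_neg, Finsupp.neg_apply, G.repr_σ i a hj] at h2
    linarith
  set cc := (G.basisAt a).repr β i with hcc
  have hβ_eq : β = cc • G.α i a := by
    have hrep : (G.basisAt a).repr β = Finsupp.single i cc := by
      ext j
      rcases eq_or_ne j i with rfl | hj
      · simp [hcc]
      · rw [hcoord j hj, Finsupp.single_eq_of_ne' (Ne.symm hj)]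
    apply (G.basisAt a).repr.injective
    rw [hrep, ← G.basisAt_apply a i, map_smul, Basis.repr_self, Finsupp.smul_single]
    simp
  have hmem : β ∈ (Set.range fun r : ℝ => r • G.α i a) ∩ G.root a :=
    ⟨⟨cc, hβ_eq.symm⟩, hβ.1⟩
  rw [G.ax4] at hmem
  rcases hmem with h' | h'
  · exact hne h'
  · have : (G.basisAt a).repr β i = -1 := by
      rw [Set.mem_singleton_iff] at h'
      rw [h', ← G.basisAt_apply a i, map_neg, Basis.repr_self]
      simp
    have := G.coord_nonneg a hβ.2 i
    rw [‹(G.basisAt a).repr β i = -1›] at this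
    linarith

lemma GRS.wmap_root (G : GRS N A) (l : List N) (a : A) :
    ⇑(G.wmap l a) '' G.root a = G.root (G.target l a) := by
  induction l with
  | nil => simp [GRS.wmap, GRS.target]; exact Set.image_id _
  | cons i l ih =>
    have h : ⇑(G.wmap (i :: l) a) = ⇑(G.σ i (G.target l a)) ∘ ⇑(G.wmap l a) := rfl
    rw [h, Set.image_comp, ih, G.ax5_root]
    rfl

end Aux

/-- behaviour of `σ_{i₁,i₁▷b}(w(R⁺_a)) ∩ (−R⁺_b)`, where the word is
`(i₁, i₂, …, i_m)` at `a`, `b = i₁⋯i_m ▷ a`, and `w` is the σ-composite of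
`(i₂, …, i_m)` at `a` (so `i₁ ▷ b = target l a` for `l = (i₂,…,i_m)`). -/
theorem stmt1 [Nonempty N] [Nonempty A] (G : GRS N A) (i₁ : N) (l : List N) (a : A) :
    (G.α i₁ (G.target l a) ∈ ⇑(G.wmap l a) '' G.pos a →
      ⇑(G.σ i₁ (G.target l a)) '' (⇑(G.wmap l a) '' G.pos a) ∩
          -G.pos (G.act i₁ (G.target l a)) =
        ⇑(G.σ i₁ (G.target l a)) '' (⇑(G.wmap l a) '' G.pos a ∩ -G.pos (G.target l a)) ∪
          {-G.α i₁ (G.act i₁ (G.target l a))}) ∧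
    (-G.α i₁ (G.target l a) ∈ ⇑(G.wmap l a) '' G.pos a →
      ⇑(G.σ i₁ (G.target l a)) '' (⇑(G.wmap l a) '' G.pos a) ∩
          -G.pos (G.act i₁ (G.target l a)) =
        ⇑(G.σ i₁ (G.target l a)) ''
          ((⇑(G.wmap l a) '' G.pos a ∩ -G.pos (G.target l a)) \ {-G.α i₁ (G.target l a)})) := by
  set c := G.target l a with hc
  set b := G.act i₁ c with hb
  set W := ⇑(G.wmap l a) '' G.pos a with hW
  have hWroot : ∀ β ∈ W, β ∈ G.root c := by
    rintro β ⟨x, hx, rfl⟩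
    have : G.wmap l a x ∈ ⇑(G.wmap l a) '' G.root a := ⟨x, hx.1, rfl⟩
    rwa [G.wmap_root l a] at this
  have hnb : ∀ β, β ∈ W → -β ∈ W → False := by
    rintro β ⟨x, hx, rfl⟩ ⟨y, hy, hyx⟩
    have hxy : y = -x := by
      apply (G.wmap l a).injective
      rw [hyx, map_neg]
    rw [hxy] at hy
    exact G.pos_disj hx hy
  have helper_pos : ∀ β ∈ G.pos c, β ≠ G.α i₁ c → G.σ i₁ c β ∉ -G.pos b := by
    intro β hp hne hmem
    rw [Set.mem_neg] at hmem
    exact G.pos_disj (G.sigma_pos i₁ c hp hne) hmem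
  have helper_neg : ∀ β ∈ -G.pos c, β ≠ -G.α i₁ c → G.σ i₁ c β ∈ -G.pos b := by
    intro β hn hne
    rw [Set.mem_neg] at hn ⊢
    rw [← map_neg]
    exact G.sigma_pos i₁ c hn (fun h => hne (by rw [← h, neg_neg]))
  constructor
  · intro h1
    ext x
    constructor
    · rintro ⟨⟨β, hβW, rfl⟩, hneg⟩
      rcases G.root_split (hWroot β hβW) with hp | hn
      · right
        have hβα : β = G.α i₁ c := by
          by_contra hne
          exact helper_pos β hp hne hneg
        rw [Set.mem_singleton_iff, hβα, G.ax5_diag]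
      · exact Or.inl ⟨β, ⟨hβW, hn⟩, rfl⟩
    · rintro (⟨β, ⟨hβW, hβn⟩, rfl⟩ | hx)
      · refine ⟨⟨β, hβW, rfl⟩, ?_⟩
        apply helper_neg β hβn
        intro h
        rw [h] at hβW
        exact hnb _ h1 hβW
      · rw [Set.mem_singleton_iff] at hx
        subst hx
        refine ⟨⟨G.α i₁ c, h1, G.ax5_diag i₁ c⟩, ?_⟩
        rw [Set.mem_neg, neg_neg]
        exact G.alpha_pos i₁ b
  · intro h2
    ext x
    constructor
    · rintro ⟨⟨β, hβW, rfl⟩, hneg⟩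
      rcases G.root_split (hWroot β hβW) with hp | hn
      · exfalso
        have hβα : β = G.α i₁ c := by
          by_contra hne
          exact helper_pos β hp hne hneg
        rw [hβα] at hβW
        exact hnb _ hβW h2
      · refine ⟨β, ⟨⟨hβW, hn⟩, ?_⟩, rfl⟩
        intro h
        rw [Set.mem_singleton_iff] at h
        have hσ : G.σ i₁ c β = G.α i₁ b := by
          rw [h, map_neg, G.ax5_diag, neg_neg]
        rw [Set.mem_neg, hσ] at hneg
        exact G.pos_disj (G.alpha_pos i₁ b) hneg
    · rintro ⟨β, ⟨⟨hβW, hβn⟩, hβne⟩, rfl⟩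
      exact ⟨⟨β, hβW, rfl⟩, helper_neg β hβn (fun h => hβne h)⟩
end

section
/- Let a ∈ A. For n ∈ ℕ set i_n := i if n is odd and i_n := j if n is even, and for m ∈ ℕ₀ set a_m := i_m i_{m−1} ⋯ i_1 ▷ a (so a_0 = a). Suppose d := |R⁺_a| is finite. Then R⁺_a = { w_m(α_{i_{m+1},a_m}) : 0 ≤ m < d }, where w_m denotes the σ-composite of the word (i_1, …, i_m) at a_m (whose target is a). Moreover α_{j,a} = w_{d−1}(α_{i_d, a_{d−1}}). -/
open Pointwise

variable {N : Type*} {A : Type*}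

namespace GRS

variable {N : Type*} {A : Type*} (G : GRS N A)

noncomputable def bas (c : A) : Module.Basis N ℝ (N →₀ ℝ) :=
  Module.Basis.mk (G.α_indep c) (by rw [G.α_span c])

lemma bas_apply (c : A) (n : N) : G.bas c n = G.α n c := Module.Basis.mk_apply _ _ _

noncomputable def co (c : A) (n : N) (β : N →₀ ℝ) : ℝ := (G.bas c).repr β n

lemma co_neg (c : A) (n : N) (β : N →₀ ℝ) : G.co c n (-β) = -G.co c n β := by
  simp [co]

lemma co_combo_x {x y : N} (hxy : x ≠ y) (c : A) (r s : ℝ) :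
    G.co c x (r • G.α x c + s • G.α y c) = r := by
  unfold co
  rw [← G.bas_apply c x, ← G.bas_apply c y]
  simp [Finsupp.single_apply, hxy.symm]

lemma co_combo_y {x y : N} (hxy : x ≠ y) (c : A) (r s : ℝ) :
    G.co c y (r • G.α x c + s • G.α y c) = s := by
  unfold co
  rw [← G.bas_apply c x, ← G.bas_apply c y]
  simp [Finsupp.single_apply, hxy]

lemma expand {x y : N} (hxy : x ≠ y) (hN2 : ∀ n : N, n = x ∨ n = y) (c : A) (β : N →₀ ℝ) :
    β = G.co c x β • G.α x c + G.co c y β • G.α y c := by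
  apply (G.bas c).repr.injective
  ext n
  rcases hN2 n with rfl | rfl
  · simp [co, ← G.bas_apply, Finsupp.single_apply, hxy.symm]
  · simp [co, ← G.bas_apply, Finsupp.single_apply, hxy]

end GRS
namespace GRS

variable {N : Type*} {A : Type*} (G : GRS N A)

lemma range_alpha_pair {x y : N} (hN2 : ∀ n : N, n = x ∨ n = y) (c : A) :
    (Set.range fun n => G.α n c) = {G.α x c, G.α y c} := by
  ext β
  constructor
  · rintro ⟨n, rfl⟩
    rcases hN2 n with rfl | rfl
    · exact Or.inl rfl
    · exact Or.inr rfl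
  · rintro (rfl | rfl)
    exacts [⟨x, rfl⟩, ⟨y, rfl⟩]

lemma mem_nspan_pair {x y : N} (hN2 : ∀ n : N, n = x ∨ n = y) (c : A) (β : N →₀ ℝ) :
    β ∈ NSpan (Set.range fun n => G.α n c) ↔
      ∃ p q : ℕ, β = (p : ℝ) • G.α x c + (q : ℝ) • G.α y c := by
  rw [G.range_alpha_pair hN2]
  constructor
  · intro hβ
    have hβ' : β ∈ AddSubmonoid.closure {G.α x c, G.α y c} := hβ
    induction hβ' using AddSubmonoid.closure_induction with
    | mem u hu =>
      rcases hu with rfl | rfl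
      · exact ⟨1, 0, by simp⟩
      · exact ⟨0, 1, by simp⟩
    | zero => exact ⟨0, 0, by simp⟩
    | add u v hu hv ihu ihv =>
      obtain ⟨p, q, rfl⟩ := ihu hu
      obtain ⟨p', q', rfl⟩ := ihv hv
      refine ⟨p + p', q + q', ?_⟩
      push_cast
      module
  · rintro ⟨p, q, rfl⟩
    have hx : G.α x c ∈ AddSubmonoid.closure {G.α x c, G.α y c} :=
      AddSubmonoid.subset_closure (by simp)
    have hy : G.α y c ∈ AddSubmonoid.closure {G.α x c, G.α y c} :=
      AddSubmonoid.subset_closure (by simp)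
    have h1 : (p : ℝ) • G.α x c ∈ AddSubmonoid.closure {G.α x c, G.α y c} := by
      rw [Nat.cast_smul_eq_nsmul]
      exact AddSubmonoid.nsmul_mem _ hx p
    have h2 : (q : ℝ) • G.α y c ∈ AddSubmonoid.closure {G.α x c, G.α y c} := by
      rw [Nat.cast_smul_eq_nsmul]
      exact AddSubmonoid.nsmul_mem _ hy q
    exact AddSubmonoid.add_mem _ h1 h2

lemma mem_pos_iff {x y : N} (hN2 : ∀ n : N, n = x ∨ n = y) (c : A) (β : N →₀ ℝ) :
    β ∈ G.pos c ↔ β ∈ G.root c ∧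
      ∃ p q : ℕ, β = (p : ℝ) • G.α x c + (q : ℝ) • G.α y c := by
  rw [pos, Set.mem_inter_iff, G.mem_nspan_pair hN2]

lemma pos_coords {x y : N} (hxy : x ≠ y) (hN2 : ∀ n : N, n = x ∨ n = y) (c : A)
    (β : N →₀ ℝ) (h : β ∈ G.pos c) :
    ∃ p q : ℕ, G.co c x β = p ∧ G.co c y β = q := by
  obtain ⟨-, p, q, rfl⟩ := (G.mem_pos_iff hN2 c β).1 h
  exact ⟨p, q, G.co_combo_x hxy c _ _, G.co_combo_y hxy c _ _⟩

lemma alpha_mem_pos {x y : N} (hN2 : ∀ n : N, n = x ∨ n = y) (c : A) :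
    G.α x c ∈ G.pos c :=
  (G.mem_pos_iff hN2 c _).2 ⟨G.α_mem x c, 1, 0, by simp⟩

lemma zero_not_root (x : N) (c : A) : (0 : N →₀ ℝ) ∉ G.root c := by
  intro h
  have hα : G.α x c ≠ 0 := by
    have := (G.bas c).ne_zero x
    rwa [G.bas_apply] at this
  have hmem : (0 : N →₀ ℝ) ∈ (Set.range fun r : ℝ => r • G.α x c) ∩ G.root c :=
    ⟨⟨0, by simp⟩, h⟩
  rw [G.ax4 x c] at hmem
  rcases hmem with h0 | h0
  · exact hα h0.symm
  · rw [Set.mem_singleton_iff] at h0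
    exact hα (neg_eq_zero.mp h0.symm)

lemma pos_ne_zero (x : N) (c : A) {β : N →₀ ℝ} (h : β ∈ G.pos c) : β ≠ 0 := by
  rintro rfl
  exact G.zero_not_root x c h.1

lemma neg_not_pos {x y : N} (hxy : x ≠ y) (hN2 : ∀ n : N, n = x ∨ n = y) (c : A)
    {β : N →₀ ℝ} (h : β ∈ G.pos c) : -β ∉ G.pos c := by
  intro h'
  obtain ⟨p, q, hp, hq⟩ := G.pos_coords hxy hN2 c β h
  obtain ⟨p', q', hp', hq'⟩ := G.pos_coords hxy hN2 c (-β) h'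
  rw [G.co_neg, hp] at hp'
  rw [G.co_neg, hq] at hq'
  have hp0 : (p : ℝ) = 0 := by
    have := Nat.cast_nonneg (α := ℝ) p
    have := Nat.cast_nonneg (α := ℝ) p'
    linarith
  have hq0 : (q : ℝ) = 0 := by
    have := Nat.cast_nonneg (α := ℝ) q
    have := Nat.cast_nonneg (α := ℝ) q'
    linarith
  have hβ0 : β = 0 := by
    rw [G.expand hxy hN2 c β, hp, hq, hp0, hq0]
    simp
  exact G.pos_ne_zero x c h hβ0

lemma eq_alpha_of_co_eq_zero {x y : N} (hxy : x ≠ y) (hN2 : ∀ n : N, n = x ∨ n = y)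
    (c : A) {β : N →₀ ℝ} (h : β ∈ G.pos c) (h0 : G.co c y β = 0) : β = G.α x c := by
  obtain ⟨p, q, hp, hq⟩ := G.pos_coords hxy hN2 c β h
  have hβ : β = G.co c x β • G.α x c := by
    conv_lhs => rw [G.expand hxy hN2 c β]
    rw [h0]; simp
  have hmem : β ∈ (Set.range fun r : ℝ => r • G.α x c) ∩ G.root c :=
    ⟨⟨G.co c x β, hβ.symm⟩, h.1⟩
  rw [G.ax4 x c] at hmem
  rcases hmem with h1 | h1
  · exact h1
  · exfalso
    rw [Set.mem_singleton_iff] at h1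
    have hco : G.co c x β = -1 := by
      rw [h1]
      have := G.co_combo_x hxy c (-1 : ℝ) 0
      simpa using this
    rw [hp] at hco
    have := Nat.cast_nonneg (α := ℝ) p
    linarith

end GRS
namespace GRS

variable {N : Type*} {A : Type*} (G : GRS N A)

open Classical in
noncomputable def mu (x y : N) (c : A) : ℕ :=
  if h : y ≠ x then (G.ax5_off x c y h).choose else 0

lemma mu_spec {x y : N} (hxy : x ≠ y) (c : A) :
    G.σ x c (G.α y c) = G.α y (G.act x c) + (G.mu x y c : ℝ) • G.α x (G.act x c) := by
  unfold mu
  rw [dif_pos (show y ≠ x from hxy.symm)]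
  exact (G.ax5_off x c y hxy.symm).choose_spec

lemma co_alpha_self {x y : N} (hxy : x ≠ y) (c : A) : G.co c x (G.α x c) = 1 := by
  have := G.co_combo_x hxy c (1 : ℝ) 0
  simpa using this

lemma co_alpha_other {x y : N} (hxy : x ≠ y) (c : A) : G.co c y (G.α x c) = 0 := by
  have := G.co_combo_y hxy c (1 : ℝ) 0
  simpa using this

lemma sigma_apply {x y : N} (hxy : x ≠ y) (hN2 : ∀ n : N, n = x ∨ n = y) (c : A)
    (β : N →₀ ℝ) :
    G.σ x c β = (G.mu x y c * G.co c y β - G.co c x β) • G.α x (G.act x c)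
      + G.co c y β • G.α y (G.act x c) := by
  conv_lhs => rw [G.expand hxy hN2 c β]
  rw [map_add, map_smul, map_smul, G.ax5_diag, G.mu_spec hxy]
  module

lemma co_sigma_x {x y : N} (hxy : x ≠ y) (hN2 : ∀ n : N, n = x ∨ n = y) (c : A)
    (β : N →₀ ℝ) :
    G.co (G.act x c) x (G.σ x c β) = G.mu x y c * G.co c y β - G.co c x β := by
  rw [G.sigma_apply hxy hN2 c β]
  exact G.co_combo_x hxy _ _ _

lemma co_sigma_y {x y : N} (hxy : x ≠ y) (hN2 : ∀ n : N, n = x ∨ n = y) (c : A)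
    (β : N →₀ ℝ) :
    G.co (G.act x c) y (G.σ x c β) = G.co c y β := by
  rw [G.sigma_apply hxy hN2 c β]
  exact G.co_combo_y hxy _ _ _

noncomputable def ff (x y : N) (c : A) (β γ : N →₀ ℝ) : ℝ :=
  G.co c x β * G.co c y γ - G.co c y β * G.co c x γ

lemma ff_sigma {x y : N} (hxy : x ≠ y) (hN2 : ∀ n : N, n = x ∨ n = y) (c : A)
    (β γ : N →₀ ℝ) :
    G.ff y x (G.act x c) (G.σ x c β) (G.σ x c γ) = G.ff x y c β γ := by
  unfold ff
  rw [G.co_sigma_x hxy hN2 c β, G.co_sigma_y hxy hN2 c β,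
    G.co_sigma_x hxy hN2 c γ, G.co_sigma_y hxy hN2 c γ]
  ring

lemma root_pos_or_neg (c : A) (β : N →₀ ℝ) (h : β ∈ G.root c) :
    β ∈ G.pos c ∨ -β ∈ G.pos c := by
  rw [G.ax3 c] at h
  rcases h with h | h
  · exact Or.inl h
  · exact Or.inr (Set.mem_neg.mp h)

lemma sigma_sigma (x : N) (c : A) (β : N →₀ ℝ) :
    G.σ x (G.act x c) (G.σ x c β) = β := G.ax6 x c β

lemma sigma_sigma' (x : N) (c : A) (β : N →₀ ℝ) :
    G.σ x c (G.σ x (G.act x c) β) = β := by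
  have := G.ax6 x (G.act x c) β
  rwa [G.act_invol] at this

lemma sigma_mem_pos {x y : N} (hxy : x ≠ y) (hN2 : ∀ n : N, n = x ∨ n = y) (c : A)
    {β : N →₀ ℝ} (hβ : β ∈ G.pos c) (hne : β ≠ G.α x c) :
    G.σ x c β ∈ G.pos (G.act x c) := by
  have hroot : G.σ x c β ∈ G.root (G.act x c) := by
    rw [← G.ax5_root x c]
    exact ⟨β, hβ.1, rfl⟩
  rcases G.root_pos_or_neg _ _ hroot with h | h
  · exact h
  · exfalso
    obtain ⟨p, q, hp, hq⟩ := G.pos_coords hxy hN2 c β hβ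
    have hqpos : (0 : ℝ) < q := by
      rcases Nat.eq_zero_or_pos q with h0 | h0
      · exact absurd (G.eq_alpha_of_co_eq_zero hxy hN2 c hβ (by rw [hq, h0]; simp)) hne
      · exact_mod_cast h0
    obtain ⟨p', q', hp', hq'⟩ := G.pos_coords hxy hN2 (G.act x c) _ h
    rw [G.co_neg, G.co_sigma_y hxy hN2 c β, hq] at hq'
    have := Nat.cast_nonneg (α := ℝ) q'
    linarith

lemma sigma_ne_alpha {x y : N} (hxy : x ≠ y) (hN2 : ∀ n : N, n = x ∨ n = y) (c : A)
    {β : N →₀ ℝ} (hβ : β ∈ G.pos c) (hne : β ≠ G.α x c) :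
    G.σ x c β ≠ G.α x (G.act x c) := by
  intro hEq
  apply hne
  apply G.eq_alpha_of_co_eq_zero hxy hN2 c hβ
  have h1 : G.co (G.act x c) y (G.σ x c β) = G.co c y β := G.co_sigma_y hxy hN2 c β
  rw [← h1, hEq, G.co_alpha_other hxy]

lemma pos_finite_act {x y : N} (hxy : x ≠ y) (hN2 : ∀ n : N, n = x ∨ n = y) (c : A)
    (hfin : (G.pos c).Finite) : (G.pos (G.act x c)).Finite := by
  apply Set.Finite.subset ((hfin.image ⇑(G.σ x c)).insert (G.α x (G.act x c)))
  intro β' hβ'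
  rw [Set.mem_insert_iff]
  by_cases h : β' = G.α x (G.act x c)
  · exact Or.inl h
  · refine Or.inr ⟨G.σ x (G.act x c) β', ?_, G.sigma_sigma' x c β'⟩
    have := G.sigma_mem_pos hxy hN2 (G.act x c) hβ' h
    rwa [G.act_invol] at this

end GRS
namespace GRS

variable {N : Type*} {A : Type*} (G : GRS N A)

def below (x y : N) (c : A) (γ : N →₀ ℝ) : Set (N →₀ ℝ) :=
  {β | β ∈ G.pos c ∧ 0 < G.ff x y c β γ}

noncomputable def rank (x y : N) (c : A) (γ : N →₀ ℝ) : ℕ := (G.below x y c γ).ncard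

lemma co_y_pos {x y : N} (hxy : x ≠ y) (hN2 : ∀ n : N, n = x ∨ n = y) (c : A)
    {γ : N →₀ ℝ} (hγ : γ ∈ G.pos c) (hne : γ ≠ G.α x c) : 0 < G.co c y γ := by
  obtain ⟨p, q, hp, hq⟩ := G.pos_coords hxy hN2 c γ hγ
  have hq0 : q ≠ 0 := by
    intro h0
    exact hne (G.eq_alpha_of_co_eq_zero hxy hN2 c hγ (by rw [hq, h0]; simp))
  rw [hq]
  exact_mod_cast Nat.pos_of_ne_zero hq0

lemma co_y_nonneg {x y : N} (hxy : x ≠ y) (hN2 : ∀ n : N, n = x ∨ n = y) (c : A)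
    {γ : N →₀ ℝ} (hγ : γ ∈ G.pos c) : 0 ≤ G.co c y γ := by
  obtain ⟨p, q, hp, hq⟩ := G.pos_coords hxy hN2 c γ hγ
  rw [hq]
  exact Nat.cast_nonneg q

lemma ff_alpha_left {x y : N} (hxy : x ≠ y) (c : A) (γ : N →₀ ℝ) :
    G.ff x y c (G.α x c) γ = G.co c y γ := by
  unfold ff
  rw [G.co_alpha_self hxy, G.co_alpha_other hxy]
  ring

lemma ff_alpha_right {x y : N} (hxy : x ≠ y) (c : A) (β : N →₀ ℝ) :
    G.ff x y c β (G.α x c) = -G.co c y β := by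
  unfold ff
  rw [G.co_alpha_self hxy, G.co_alpha_other hxy]
  ring

lemma ff_alpha_left' {x y : N} (hxy : x ≠ y) (c : A) (γ : N →₀ ℝ) :
    G.ff x y c (G.α y c) γ = -G.co c x γ := by
  unfold ff
  rw [G.co_alpha_self hxy.symm, G.co_alpha_other hxy.symm]
  ring

lemma below_step {x y : N} (hxy : x ≠ y) (hN2 : ∀ n : N, n = x ∨ n = y) (c : A)
    {γ : N →₀ ℝ} (hγ : γ ∈ G.pos c) (hne : γ ≠ G.α x c) :
    G.below x y c γ =
      insert (G.α x c) (⇑(G.σ x (G.act x c)) '' G.below y x (G.act x c) (G.σ x c γ)) := by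
  ext β
  rw [Set.mem_insert_iff]
  constructor
  · rintro ⟨hβpos, hβf⟩
    by_cases h : β = G.α x c
    · exact Or.inl h
    · refine Or.inr ⟨G.σ x c β, ⟨G.sigma_mem_pos hxy hN2 c hβpos h, ?_⟩, G.sigma_sigma x c β⟩
      rw [G.ff_sigma hxy hN2 c β γ]
      exact hβf
  · rintro (rfl | ⟨β', ⟨hβ'pos, hβ'f⟩, rfl⟩)
    · refine ⟨G.alpha_mem_pos hN2 c, ?_⟩
      rw [G.ff_alpha_left hxy]
      exact G.co_y_pos hxy hN2 c hγ hne
    · -- image case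
      have hβ'ne : β' ≠ G.α x (G.act x c) := by
        rintro rfl
        rw [G.ff_alpha_left' hxy.symm, G.co_sigma_y hxy hN2 c γ] at hβ'f
        have := G.co_y_nonneg hxy hN2 c hγ
        linarith
      have hmem : G.σ x (G.act x c) β' ∈ G.pos c := by
        have := G.sigma_mem_pos hxy hN2 (G.act x c) hβ'pos hβ'ne
        rwa [G.act_invol] at this
      refine ⟨hmem, ?_⟩
      have h1 := G.ff_sigma hxy hN2 c (G.σ x (G.act x c) β') γ
      rw [G.sigma_sigma' x c β'] at h1
      rw [← h1]
      exact hβ'f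

lemma rank_step {x y : N} (hxy : x ≠ y) (hN2 : ∀ n : N, n = x ∨ n = y) (c : A)
    {γ : N →₀ ℝ} (hfin : (G.pos c).Finite) (hγ : γ ∈ G.pos c) (hne : γ ≠ G.α x c) :
    G.rank x y c γ = G.rank y x (G.act x c) (G.σ x c γ) + 1 := by
  have hfin' : (G.below y x (G.act x c) (G.σ x c γ)).Finite :=
    (G.pos_finite_act hxy hN2 c hfin).subset fun β h => h.1
  have hnotmem : G.α x c ∉ ⇑(G.σ x (G.act x c)) '' G.below y x (G.act x c) (G.σ x c γ) := by
    rintro ⟨β', hβ', hEq⟩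
    have hβ'eq : β' = -G.α x (G.act x c) := by
      have h1 : β' = G.σ x c (G.α x c) := by rw [← hEq, G.sigma_sigma']
      rw [G.ax5_diag] at h1
      exact h1
    have halpha : G.α x (G.act x c) ∈ G.pos (G.act x c) := G.alpha_mem_pos hN2 _
    exact G.neg_not_pos hxy hN2 (G.act x c) halpha (hβ'eq ▸ hβ'.1)
  rw [rank, G.below_step hxy hN2 c hγ hne,
    Set.ncard_insert_of_notMem hnotmem (hfin'.image _),
    Set.ncard_image_of_injective _ (G.σ x (G.act x c)).injective]
  rfl

lemma rank_lt {x y : N} (c : A) {γ : N →₀ ℝ} (hfin : (G.pos c).Finite)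
    (hγ : γ ∈ G.pos c) : G.rank x y c γ < (G.pos c).ncard := by
  apply Set.ncard_lt_ncard _ hfin
  constructor
  · exact fun β h => h.1
  · intro hsub
    have h1 := (hsub hγ).2
    have h0 : G.ff x y c γ γ = 0 := by unfold ff; ring
    rw [h0] at h1
    exact lt_irrefl 0 h1

noncomputable def chain : N → N → A → ℕ → (N →₀ ℝ)
  | x, _, c, 0 => G.α x c
  | x, y, c, m + 1 => G.σ x (G.act x c) (chain y x (G.act x c) m)

@[simp] lemma chain_zero (x y : N) (c : A) : G.chain x y c 0 = G.α x c := rfl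

lemma chain_succ (x y : N) (c : A) (m : ℕ) :
    G.chain x y c (m + 1) = G.σ x (G.act x c) (G.chain y x (G.act x c) m) := rfl

lemma chain_of_rank : ∀ (k : ℕ) (x y : N), x ≠ y → (∀ n : N, n = x ∨ n = y) →
    ∀ (c : A), (G.pos c).Finite → ∀ γ, γ ∈ G.pos c → G.rank x y c γ = k →
    γ = G.chain x y c k := by
  intro k
  induction k with
  | zero =>
    intro x y hxy hN2 c hfin γ hγ hr
    show γ = G.α x c
    by_contra hne
    have hmem : G.α x c ∈ G.below x y c γ := by
      refine ⟨G.alpha_mem_pos hN2 c, ?_⟩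
      rw [G.ff_alpha_left hxy]
      exact G.co_y_pos hxy hN2 c hγ hne
    have hbfin : (G.below x y c γ).Finite := hfin.subset fun β h => h.1
    have : 0 < G.rank x y c γ := (Set.ncard_pos hbfin).2 ⟨_, hmem⟩
    omega
  | succ k ih =>
    intro x y hxy hN2 c hfin γ hγ hr
    have hne : γ ≠ G.α x c := by
      rintro rfl
      have hempty : G.below x y c (G.α x c) = ∅ := by
        ext β
        simp only [below, Set.mem_setOf_eq, Set.mem_empty_iff_false, iff_false, not_and, not_lt]
        intro hβ
        rw [G.ff_alpha_right hxy]
        have := G.co_y_nonneg hxy hN2 c hβ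
        linarith
      rw [rank, hempty] at hr
      simp at hr
    have hstep := G.rank_step hxy hN2 c hfin hγ hne
    rw [hr] at hstep
    have hr' : G.rank y x (G.act x c) (G.σ x c γ) = k := by omega
    have hfin' := G.pos_finite_act hxy hN2 c hfin
    have hσ := G.sigma_mem_pos hxy hN2 c hγ hne
    have hch := ih y x hxy.symm (fun n => (hN2 n).symm) (G.act x c) hfin' _ hσ hr'
    calc γ = G.σ x (G.act x c) (G.σ x c γ) := (G.sigma_sigma x c γ).symm
    _ = G.σ x (G.act x c) (G.chain y x (G.act x c) k) := by rw [← hch]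
    _ = G.chain x y c (k + 1) := (G.chain_succ x y c k).symm

lemma rank_top {x y : N} (hxy : x ≠ y) (hN2 : ∀ n : N, n = x ∨ n = y) (c : A)
    (hfin : (G.pos c).Finite) :
    G.rank x y c (G.α y c) = (G.pos c).ncard - 1 := by
  have hN2' : ∀ n : N, n = y ∨ n = x := fun n => (hN2 n).symm
  have hset : G.below x y c (G.α y c) = G.pos c \ {G.α y c} := by
    ext β
    constructor
    · rintro ⟨hβ, hf⟩
      refine ⟨hβ, ?_⟩
      intro hmem
      rw [Set.mem_singleton_iff] at hmem
      subst hmem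
      have h0 : G.ff x y c (G.α y c) (G.α y c) = 0 := by unfold ff; ring
      rw [h0] at hf
      exact lt_irrefl 0 hf
    · rintro ⟨hβ, hne⟩
      rw [Set.mem_singleton_iff] at hne
      refine ⟨hβ, ?_⟩
      have h1 : G.ff x y c β (G.α y c) = G.co c x β := by
        unfold ff
        rw [G.co_alpha_self hxy.symm, G.co_alpha_other hxy.symm]
        ring
      rw [h1]
      exact G.co_y_pos hxy.symm hN2' c hβ hne
  rw [rank, hset, Set.ncard_diff_singleton_of_mem (G.alpha_mem_pos hN2' c)]

end GRS
section Glue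

variable {N : Type*} {A : Type*}

lemma aIter_swap (act : N → A → A) (x y : N) (c : A) (m : ℕ) :
    aIter act x y c (m + 1) = aIter act y x (act x c) m := by
  induction m with
  | zero => rfl
  | succ m ih =>
    have h : (if (m + 1) % 2 = 0 then x else y) = (if m % 2 = 0 then y else x) := by
      rcases Nat.mod_two_eq_zero_or_one m with h | h
      · have h2 : (m + 1) % 2 = 1 := by omega
        simp [h, h2]
      · have h2 : (m + 1) % 2 = 0 := by omega
        simp [h, h2]
    show act (if (m + 1) % 2 = 0 then x else y) (aIter act x y c (m + 1)) =
      act (if m % 2 = 0 then y else x) (aIter act y x (act x c) m)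
    rw [ih, h]

lemma GRS.target_altList (G : GRS N A) : ∀ (m : ℕ) (x y : N) (c : A),
    G.target (altList x y m) (aIter G.act x y c m) = c := by
  intro m
  induction m with
  | zero => intro x y c; rfl
  | succ m ih =>
    intro x y c
    rw [aIter_swap]
    show G.act x (G.target (altList y x m) (aIter G.act y x (G.act x c) m)) = c
    rw [ih y x (G.act x c), G.act_invol]

lemma GRS.chain_eq_wmap (G : GRS N A) : ∀ (m : ℕ) (x y : N) (c : A),
    G.chain x y c m = G.wmap (altList x y m) (aIter G.act x y c m)
      (G.α (if m % 2 = 0 then x else y) (aIter G.act x y c m)) := by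
  intro m
  induction m with
  | zero => intro x y c; rfl
  | succ m ih =>
    intro x y c
    have hL : (if (m + 1) % 2 = 0 then x else y) = (if m % 2 = 0 then y else x) := by
      rcases Nat.mod_two_eq_zero_or_one m with h | h
      · have h2 : (m + 1) % 2 = 1 := by omega
        simp [h, h2]
      · have h2 : (m + 1) % 2 = 0 := by omega
        simp [h, h2]
    rw [G.chain_succ, aIter_swap, hL, ih y x (G.act x c)]
    show _ = ((G.wmap (altList y x m) (aIter G.act y x (G.act x c) m)).trans
        (G.σ x (G.target (altList y x m) (aIter G.act y x (G.act x c) m))))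
        (G.α (if m % 2 = 0 then y else x) (aIter G.act y x (G.act x c) m))
    rw [LinearEquiv.trans_apply, G.target_altList m y x (G.act x c)]

end Glue
/-- (rank two, `d = |R⁺_a|` finite) description of `R⁺_a` via the
alternating words, and `α_{j,a} = w_{d−1}(α_{i_d,a_{d−1}})`. -/
theorem stmt5 [Nonempty A] (G : GRS N A) (i j : N) (hij : i ≠ j)
    (hN : ∀ n : N, n = i ∨ n = j) (a : A) (hfin : (G.pos a).Finite) :
    G.pos a = {β | ∃ m : ℕ, m < (G.pos a).ncard ∧
        β = G.wmap (altList i j m) (aIter G.act i j a m)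
            (G.α (if m % 2 = 0 then i else j) (aIter G.act i j a m))} ∧
    G.α j a = G.wmap (altList i j ((G.pos a).ncard - 1))
        (aIter G.act i j a ((G.pos a).ncard - 1))
        (G.α (if ((G.pos a).ncard - 1) % 2 = 0 then i else j)
          (aIter G.act i j a ((G.pos a).ncard - 1))) := by
  classical
  have hN' : ∀ n : N, n = j ∨ n = i := fun n => (hN n).symm
  -- surjectivity of the rank function
  have hinj : ∀ γ ∈ G.pos a, ∀ γ' ∈ G.pos a,
      G.rank i j a γ = G.rank i j a γ' → γ = γ' := by
    intro γ hγ γ' hγ' hEq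
    have h1 := G.chain_of_rank (G.rank i j a γ) i j hij hN a hfin γ hγ rfl
    have h2 := G.chain_of_rank (G.rank i j a γ') i j hij hN a hfin γ' hγ' rfl
    rw [h1, h2, hEq]
  have hsurj : ∀ m, m < (G.pos a).ncard → G.chain i j a m ∈ G.pos a := by
    intro m hm
    have himage : hfin.toFinset.image (G.rank i j a) = Finset.range (G.pos a).ncard := by
      apply Finset.eq_of_subset_of_card_le
      · intro k hk
        obtain ⟨γ, hγs, rfl⟩ := Finset.mem_image.1 hk
        have hγ : γ ∈ G.pos a := hfin.mem_toFinset.1 hγs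
        exact Finset.mem_range.2 (G.rank_lt a hfin hγ)
      · rw [Finset.card_range, Finset.card_image_of_injOn
          (fun γ hγ γ' hγ' h => hinj γ (hfin.mem_toFinset.1 hγ) γ' (hfin.mem_toFinset.1 hγ') h),
          Set.ncard_eq_toFinset_card (G.pos a) hfin]
    have hm' : m ∈ hfin.toFinset.image (G.rank i j a) := by
      rw [himage]
      exact Finset.mem_range.2 hm
    obtain ⟨γ, hγs, hrγ⟩ := Finset.mem_image.1 hm'
    have hγ : γ ∈ G.pos a := hfin.mem_toFinset.1 hγs
    have := G.chain_of_rank m i j hij hN a hfin γ hγ hrγ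
    rw [← this]
    exact hγ
  constructor
  · ext β
    simp only [Set.mem_setOf_eq]
    constructor
    · intro hβ
      refine ⟨G.rank i j a β, G.rank_lt a hfin hβ, ?_⟩
      rw [← G.chain_eq_wmap]
      exact G.chain_of_rank _ i j hij hN a hfin β hβ rfl
    · rintro ⟨m, hm, rfl⟩
      rw [← G.chain_eq_wmap]
      exact hsurj m hm
  · rw [← G.chain_eq_wmap]
    exact G.chain_of_rank ((G.pos a).ncard - 1) i j hij hN a hfin (G.α j a)
      (G.alpha_mem_pos hN' a) (G.rank_top hij hN a hfin)
end
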